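/- Let k ≥ 3, let σ ∈ {−1,+1}^k, let ζ ∈ ℂ satisfy ζ^{k−2} = σ_1⋯σ_k, and let z ∈ ℂ^k have coordinates z_i = σ_i · ζ. With g(x) = −(x_1²+⋯+x_k²)/2 + x_1⋯x_k, the Hessian matrix (Hess g)(z) (which has diagonal entries −1 and (i,j)-entry ∏_{l≠i,j} z_l for i ≠ j) satisfies det((Hess g)(z)) = (−1)^{k−1} · 2^{k−1} · (k−2). -/

import Mathlib

open MvPolynomial

lemma pderiv_prod_X {k : ℕ} (s : Finset (Fin k)) (i : Fin k) :
    MvPolynomial.pderiv i (∏ l ∈ s, MvPolynomial.X l : MvPolynomial (Fin k) ℂ) =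
      if i ∈ s then ∏ l ∈ s.erase i, MvPolynomial.X l else 0 := by
  induction s using Finset.induction_on with
  | empty => simp
  | insert a t hnot ih =>
    rw [Finset.prod_insert hnot, pderiv_mul, ih]
    by_cases hia : i = a
    · subst hia
      simp [hnot, Finset.erase_insert hnot, pderiv_X_self]
    · rw [pderiv_X_of_ne (Ne.symm hia)]
      by_cases hit : i ∈ t
      · rw [if_pos hit, if_pos (Finset.mem_insert.mpr (Or.inr hit)),
          Finset.erase_insert_of_ne (Ne.symm hia),
          Finset.prod_insert (fun h => hnot (Finset.mem_of_mem_erase h))]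
        ring
      · rw [if_neg hit, if_neg (by simp [hia, hit])]
        ring
lemma pderiv_sq_X {k : ℕ} (l j : Fin k) :
    MvPolynomial.pderiv j (MvPolynomial.X l ^ 2 : MvPolynomial (Fin k) ℂ) =
      if l = j then 2 * MvPolynomial.X j else 0 := by
  by_cases h : l = j
  · subst h
    rw [if_pos rfl, pderiv_pow, pderiv_X_self]
    ring_nf
  · rw [if_neg h, pderiv_pow, pderiv_X_of_ne h, mul_zero]

/-- The Hessian matrix at `z ∈ ℂ^k` of `g(x) = -(x₁² + ⋯ + x_k²)/2 + x₁⋯x_k`. -/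
noncomputable def hessGProd (k : ℕ) (z : Fin k → ℂ) : Matrix (Fin k) (Fin k) ℂ :=
  Matrix.of fun i j =>
    MvPolynomial.eval z (MvPolynomial.pderiv i (MvPolynomial.pderiv j
      (-(MvPolynomial.C (1 / 2 : ℂ) * ∑ l, MvPolynomial.X l ^ 2) +
        ∏ l, MvPolynomial.X l)))

lemma hessGProd_apply {k : ℕ} (z : Fin k → ℂ) (i j : Fin k) :
    hessGProd k z i j =
      if i = j then -1 else ∏ l ∈ (Finset.univ.erase j).erase i, z l := by
  have hC2 : (MvPolynomial.C (1/2 : ℂ) : MvPolynomial (Fin k) ℂ) * 2 = 1 := by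
    rw [show (2 : MvPolynomial (Fin k) ℂ) = MvPolynomial.C 2 from (map_ofNat _ 2).symm,
      ← MvPolynomial.C_mul]
    norm_num
  have h1 : MvPolynomial.pderiv j
      (-(MvPolynomial.C (1 / 2 : ℂ) * ∑ l, MvPolynomial.X l ^ 2) +
        ∏ l, MvPolynomial.X l : MvPolynomial (Fin k) ℂ) =
      -(MvPolynomial.X j) + ∏ l ∈ Finset.univ.erase j, MvPolynomial.X l := by
    rw [map_add, map_neg, pderiv_C_mul, map_sum, pderiv_prod_X, if_pos (Finset.mem_univ j)]
    congr 1
    rw [Finset.sum_congr rfl fun l _ => pderiv_sq_X l j, Finset.sum_ite_eq' Finset.univ j]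
    rw [if_pos (Finset.mem_univ j)]
    rw [show MvPolynomial.C (1/2 : ℂ) * (2 * MvPolynomial.X j)
        = (MvPolynomial.C (1/2 : ℂ) * 2) * MvPolynomial.X j by ring, hC2, one_mul]
  show MvPolynomial.eval z _ = _
  rw [h1, map_add, map_neg, pderiv_prod_X]
  by_cases hij : i = j
  · subst hij
    rw [if_pos rfl, if_neg (Finset.notMem_erase i _), pderiv_X_self]
    simp
  · rw [if_neg hij, pderiv_X_of_ne (Ne.symm hij),
      if_pos (Finset.mem_erase.mpr ⟨hij, Finset.mem_univ i⟩)]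
    simp [MvPolynomial.eval_prod]

theorem stmt_15 (k : ℕ) (hk : 3 ≤ k) (σ : Fin k → ℝ) (hσ : ∀ i, σ i = 1 ∨ σ i = -1)
    (ζ : ℂ) (hζ : ζ ^ (k - 2) = ∏ i, (σ i : ℂ))
    (z : Fin k → ℂ) (hz : ∀ i, z i = (σ i : ℂ) * ζ) :
    (hessGProd k z).det = (-1 : ℂ) ^ (k - 1) * 2 ^ (k - 1) * ((k : ℂ) - 2) := by
  set s : Fin k → ℂ := fun i => (σ i : ℂ) with hs
  have hs2 : ∀ i, s i * s i = 1 := by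
    intro i
    rcases hσ i with h | h <;> simp [hs, h]
  have hP : (∏ i, s i) * (∏ i, s i) = 1 := by
    rw [← Finset.prod_mul_distrib]
    simp [hs2]
  have hoff : ∀ i j : Fin k, i ≠ j →
      (∏ l ∈ (Finset.univ.erase j).erase i, z l) = s i * s j := by
    intro i j hij
    have hcard : ((Finset.univ.erase j).erase i).card = k - 2 := by
      rw [Finset.card_erase_of_mem (Finset.mem_erase.mpr ⟨hij, Finset.mem_univ i⟩),
        Finset.card_erase_of_mem (Finset.mem_univ j)]
      simp only [Finset.card_univ, Fintype.card_fin]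
      omega
    have h1 : (∏ l ∈ (Finset.univ.erase j).erase i, z l)
        = (∏ l ∈ (Finset.univ.erase j).erase i, s l) * ζ ^ (k - 2) := by
      rw [Finset.prod_congr rfl fun l _ => hz l, Finset.prod_mul_distrib,
        Finset.prod_const, hcard]
    have h2 : s j * (s i * ∏ l ∈ (Finset.univ.erase j).erase i, s l) = ∏ i, s i := by
      rw [Finset.mul_prod_erase (Finset.univ.erase j) s
        (Finset.mem_erase.mpr ⟨hij, Finset.mem_univ i⟩),
        Finset.mul_prod_erase Finset.univ s (Finset.mem_univ j)]
    have h3 : (∏ l ∈ (Finset.univ.erase j).erase i, s l) = s i * s j * ∏ l, s l :=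
      calc (∏ l ∈ (Finset.univ.erase j).erase i, s l)
          = (s i * s i) * ((s j * s j) * ∏ l ∈ (Finset.univ.erase j).erase i, s l) := by
            rw [hs2 i, hs2 j, one_mul, one_mul]
        _ = s i * s j * (s j * (s i * ∏ l ∈ (Finset.univ.erase j).erase i, s l)) := by ring
        _ = s i * s j * ∏ l, s l := by rw [h2]
    rw [h1, h3, hζ]
    calc s i * s j * (∏ i, s i) * (∏ i, s i)
        = s i * s j * ((∏ i, s i) * (∏ i, s i)) := by ring
      _ = s i * s j := by rw [hP, mul_one]
  set u : Fin k → ℂ := fun l => -(1/2 : ℂ) * s l with hu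
  have hM : hessGProd k z = (-2 : ℂ) • (1 + Matrix.replicateCol Unit u * Matrix.replicateRow Unit s) := by
    ext i j
    rw [hessGProd_apply]
    simp only [Matrix.smul_apply, Matrix.add_apply, Matrix.mul_apply, Finset.univ_unique,
      Finset.sum_singleton, Matrix.replicateCol_apply, Matrix.replicateRow_apply, smul_eq_mul, hu]
    by_cases hij : i = j
    · subst hij
      rw [if_pos rfl, Matrix.one_apply_eq]
      linear_combination -(hs2 i)
    · rw [if_neg hij, Matrix.one_apply_ne hij, hoff i j hij]
      ring
  have hdot : dotProduct s u = -(k : ℂ) / 2 := by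
    simp only [dotProduct, hu]
    rw [Finset.sum_congr rfl fun i _ =>
      (by rw [show s i * (-(1/2 : ℂ) * s i) = -(1/2) * (s i * s i) by ring, hs2 i] :
        s i * (-(1/2 : ℂ) * s i) = -(1/2) * 1)]
    rw [Finset.sum_const, Finset.card_univ, Fintype.card_fin]
    ring
  rw [hM, Matrix.det_smul, Matrix.det_one_add_replicateCol_mul_replicateRow, hdot]
  simp only [Fintype.card_fin, smul_eq_mul]
  obtain ⟨n, rfl⟩ : ∃ n, k = n + 3 := ⟨k - 3, by omega⟩
  rw [show n + 3 - 1 = n + 2 by omega]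
  push_cast
  rw [show ((-2 : ℂ)) ^ (n + 3) = ((-1 : ℂ)) ^ (n + 2) * 2 ^ (n + 2) * (-2) by
    rw [show ((-2 : ℂ)) ^ (n + 3) = ((-1 : ℂ) * 2) ^ (n + 2) * (-2) by ring, mul_pow]]
  ring
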